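/- Let E be an infinite set and k an infinite cardinal with card(E)^k = card(E). Then there exists a strictly k-independent family {A_i : i ∈ I} of subsets of E with card(I) = 2^{card(E)}. -/

import Mathlib

open Set Cardinal

universe u

/-- Proposition 2.12: if `E` is infinite with `card(E) ^ k = card(E)`,
there is a strictly `k`-independent family of subsets of `E` of cardinality
`2 ^ card(E)`. -/
theorem stmt_6 {E : Type u} (hE : ℵ₀ ≤ #E) (k : Cardinal.{u}) (hk : ℵ₀ ≤ k)
    (hpow : #E ^ k = #E) :
    ∃ I : Set (Set E), #I = 2 ^ #E ∧
      ∀ J ⊆ I, #J ≤ k → ∀ f : Set E → Bool,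
        (⋂ A ∈ J, if f A then Aᶜ else A).Nonempty := by
  classical
  have hKcard : #k.out = k := mk_out k
  have hKne : Nonempty k.out := by
    rw [← mk_ne_zero_iff, hKcard]; exact (aleph0_pos.trans_le hk).ne'
  have hEne : Nonempty E := by
    rw [← mk_ne_zero_iff]; exact (aleph0_pos.trans_le hE).ne'
  have h2E : (2 : Cardinal) ≤ #E := ((nat_lt_aleph0 2).le.trans hE)
  have h2k : (2 : Cardinal) ^ k ≤ #E := by
    calc (2:Cardinal) ^ k ≤ #E ^ k := power_le_power_right h2E
    _ = #E := hpow
  have harrow : #(k.out → E) = #E := by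
    rw [← power_def, hKcard, hpow]
  have hopt : #(k.out → Option (Set k.out)) ≤ #E := by
    rw [← power_def, hKcard]
    calc #(Option (Set k.out)) ^ k ≤ #E ^ k := by
          apply power_le_power_right
          rw [mk_option, mk_set, hKcard]
          calc (2:Cardinal) ^ k + 1 ≤ #E + #E := add_le_add h2k (one_le_aleph0.trans hE)
          _ = #E := add_eq_self hE
    _ = #E := hpow
  have hDcard : #((k.out → E) × (k.out → Option (Set k.out))) = #E := by
    apply le_antisymm
    · rw [mk_prod, lift_id, lift_id]
      calc #(k.out → E) * #(k.out → Option (Set k.out)) ≤ #E * #E :=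
            mul_le_mul' harrow.le hopt
      _ = #E := mul_eq_self hE
    · exact mk_le_of_injective (f := fun x => ((fun _ => x), (fun _ => none)))
        (by intro a b h; exact congrFun (congrArg Prod.fst h) hKne.some)
  obtain ⟨e⟩ := Cardinal.eq.mp hDcard
  -- the "pattern" sets in D and the family A
  set P : Set E → Set ((k.out → E) × (k.out → Option (Set k.out))) :=
    fun X => {p | ∃ i, p.2 i = some (p.1 ⁻¹' X)} with hP
  set A : Set E → Set E := fun X => e '' P X with hA
  have hmem : ∀ (X : Set E) p, e p ∈ A X ↔ p ∈ P X := by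
    intro X p
    exact ⟨fun h => by
      obtain ⟨q, hq, hqe⟩ := h
      rwa [← e.injective hqe], fun h => mem_image_of_mem _ h⟩
  -- injectivity of A
  have key : ∀ X Y : Set E, A X = A Y → ∀ a ∈ X, a ∈ Y := by
    intro X Y h a ha
    obtain ⟨i0⟩ := hKne
    set p : (k.out → E) × (k.out → Option (Set k.out)) :=
      ((fun _ => a), (fun _ => some univ)) with hp
    have hpX : p ∈ P X := ⟨i0, by
      simp only [hP, hp]
      congr 1
      ext i
      simp [ha]⟩
    have : e p ∈ A Y := by rw [← h]; exact mem_image_of_mem _ hpX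
    obtain ⟨i, hi⟩ := (hmem Y p).mp this
    simp only [hp] at hi
    have : (univ : Set k.out) = (fun _ => a) ⁻¹' Y := Option.some.inj hi
    have := this ▸ mem_univ i0
    exact this
  have hAinj : Function.Injective A := by
    intro X Y h
    ext a
    exact ⟨fun ha => key X Y h a ha, fun ha => key Y X h.symm a ha⟩
  refine ⟨range A, ?_, ?_⟩
  · rw [mk_range_eq A hAinj, mk_set]
  intro J hJI hJk f
  -- S : the index sets involved
  set S : Set (Set E) := {X | A X ∈ J} with hS
  have hSk : #S ≤ k := by
    refine le_trans (mk_le_of_injective (f := fun X : S => (⟨A X, X.2⟩ : J)) ?_) hJk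
    intro X Y h
    exact Subtype.ext (hAinj (Subtype.ext_iff.mp h))
  -- the separating function F
  obtain ⟨ι⟩ := (Cardinal.le_def _ _).mp (show #(S × S) ≤ #k.out by
    simp only [mk_prod, lift_id]
    rw [hKcard]
    calc #S * #S ≤ k * k := mul_le_mul' hSk hSk
    _ = k := mul_eq_self hk)
  set wit : S × S → E := fun q =>
    if h : (((q.1 : Set E) \ (q.2 : Set E)) ∪ ((q.2 : Set E) \ (q.1 : Set E))).Nonempty
    then h.choose else Classical.choice hEne with hwit
  set F : k.out → E := Function.extend ι wit (fun _ => Classical.choice hEne) with hF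
  have hFι : ∀ q, F (ι q) = wit q := fun q => ι.injective.extend_apply _ _ q
  -- the listing function G
  set S₀ : Set (Set E) := {X | X ∈ S ∧ f (A X) = false} with hS₀
  obtain ⟨ι₂⟩ := (Cardinal.le_def _ _).mp (show #S₀ ≤ #k.out by
    rw [hKcard]
    exact le_trans (mk_le_mk_of_subset (fun X hX => hX.1)) hSk)
  set G : k.out → Option (Set k.out) :=
    Function.extend ι₂ (fun Y => some (F ⁻¹' (Y : Set E))) (fun _ => none) with hG
  have hGι : ∀ Y, G (ι₂ Y) = some (F ⁻¹' (Y : Set E)) :=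
    fun Y => ι₂.injective.extend_apply _ _ Y
  have hGnone : ∀ i, (¬∃ Y, ι₂ Y = i) → G i = none :=
    fun i hi => Function.extend_apply' _ _ _ hi
  refine ⟨e (F, G), ?_⟩
  rw [mem_iInter₂]
  intro B hB
  obtain ⟨X, rfl⟩ := hJI hB
  have hXS : X ∈ S := hB
  rcases hfb : f (A X) with _ | _
  · -- f (A X) = false : need membership in A X
    rw [if_neg (by simp)]
    refine (hmem X (F, G)).mpr ⟨ι₂ ⟨X, hXS, hfb⟩, ?_⟩
    exact hGι ⟨X, hXS, hfb⟩
  · -- f (A X) = true : need membership in (A X)ᶜ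
    rw [if_pos rfl]
    intro hmemAX
    obtain ⟨i, hi⟩ := (hmem X (F, G)).mp hmemAX
    replace hi : G i = some (F ⁻¹' X) := hi
    have hex : ∃ Y, ι₂ Y = i := by
      by_contra hno
      rw [hGnone i hno] at hi
      exact nomatch hi
    obtain ⟨Y, rfl⟩ := hex
    rw [hGι Y] at hi
    have hpre : F ⁻¹' (Y : Set E) = F ⁻¹' X := Option.some.inj hi
    have hYS : (Y : Set E) ∈ S := Y.2.1
    have hXY : X ≠ (Y : Set E) := by
      intro h
      rw [h] at hfb
      rw [Y.2.2] at hfb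
      exact Bool.noConfusion hfb
    set q : S × S := (⟨X, hXS⟩, ⟨(Y : Set E), hYS⟩) with hq
    have hne : ((X \ (Y : Set E)) ∪ ((Y : Set E) \ X)).Nonempty := by
      by_contra hempty
      rw [not_nonempty_iff_eq_empty, union_empty_iff, diff_eq_empty, diff_eq_empty] at hempty
      exact hXY (le_antisymm hempty.1 hempty.2)
    have hwq : wit q ∈ (X \ (Y : Set E)) ∪ ((Y : Set E) \ X) := by
      rw [hwit]
      simp only [hq, dif_pos hne]
      exact hne.choose_spec
    have hFq : F (ι q) = wit q := hFι q
    rcases hwq with hw | hw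
    · have h1 : ι q ∈ F ⁻¹' X := by rw [mem_preimage, hFq]; exact hw.1
      have h2 : ι q ∉ F ⁻¹' (Y : Set E) := by rw [mem_preimage, hFq]; exact hw.2
      rw [hpre] at h2
      exact h2 h1
    · have h1 : ι q ∈ F ⁻¹' (Y : Set E) := by rw [mem_preimage, hFq]; exact hw.1
      have h2 : ι q ∉ F ⁻¹' X := by rw [mem_preimage, hFq]; exact hw.2
      rw [hpre] at h1
      exact h2 h1
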